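/- Let n ≥ 2 and let w_0, w_1, …, w_l be a symmetric filter of length l (0 < l ≤ ⌊(n−1)/2⌋), with w_k = 0 for k > l. Let W^R = T + H^R ∈ ℝ^{n×n}, where [T]_{i,j} = w_{|i−j|} and [H^R]_{i,j} = w_{i+j−1} + w_{2n+1−i−j} (indices 1 ≤ i,j ≤ n). Then for every i ∈ {1,…,n}, the vector q_i with entries (q_i)_j = cos((i−1)(2j−1)π/(2n)) satisfies W^R q_i = λ_i^R q_i, where λ_i^R = w_0 + 2∑_{j=1}^{l} w_j cos(j(i−1)π/n). -/

import Mathlib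

private lemma sum_shift_sub (f : ℤ → ℝ) (n : ℕ) (c : ℤ) :
    ∑ m ∈ Finset.range n, f (c - m) = ∑ k ∈ Finset.Icc (c - n + 1) c, f k := by
  induction n with
  | zero => simp
  | succ n ih =>
      rw [Finset.sum_range_succ, ih]
      have h : Finset.Icc (c - (n+1 : ℕ) + 1) c = insert (c - n) (Finset.Icc (c - n + 1) c) := by
        ext x; simp only [Finset.mem_Icc, Finset.mem_insert]; omega
      rw [h, Finset.sum_insert (by simp only [Finset.mem_Icc]; omega), add_comm]

private lemma sum_shift_add (f : ℤ → ℝ) (n : ℕ) (c : ℤ) :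
    ∑ m ∈ Finset.range n, f (c + m) = ∑ k ∈ Finset.Icc c (c + n - 1), f k := by
  induction n with
  | zero => simp
  | succ n ih =>
      rw [Finset.sum_range_succ, ih]
      have h : Finset.Icc c (c + (n+1 : ℕ) - 1) = insert (c + n) (Finset.Icc c (c + n - 1)) := by
        ext x; simp only [Finset.mem_Icc, Finset.mem_insert]; omega
      rw [h, Finset.sum_insert (by simp only [Finset.mem_Icc]; omega), add_comm]

private lemma sum_Icc_merge (f : ℤ → ℝ) (a b c : ℤ) (hab : a ≤ b + 1) (hbc : b ≤ c) :
    (∑ k ∈ Finset.Icc a b, f k) + ∑ k ∈ Finset.Icc (b+1) c, f k = ∑ k ∈ Finset.Icc a c, f k := by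
  rw [← Finset.sum_union (by
    rw [Finset.disjoint_left]
    intro x hx hx'
    simp only [Finset.mem_Icc] at hx hx'
    omega)]
  congr 1
  ext x
  simp only [Finset.mem_union, Finset.mem_Icc]
  omega

private lemma sum_Icc_neg (f : ℤ → ℝ) (a b : ℤ) :
    ∑ k ∈ Finset.Icc a b, f (-k) = ∑ k ∈ Finset.Icc (-b) (-a), f k := by
  refine Finset.sum_nbij' (fun k => -k) (fun k => -k) ?_ ?_ ?_ ?_ ?_ <;>
    intro x hx <;> simp only [Finset.mem_Icc, neg_neg] at * <;> omega

private lemma sum_Icc_one_int_nat (f : ℤ → ℝ) (b : ℕ) :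
    ∑ k ∈ Finset.Icc (1:ℤ) (b:ℤ), f k = ∑ k ∈ Finset.Icc 1 b, f ((k : ℕ) : ℤ) := by
  refine Finset.sum_nbij' (fun k : ℤ => k.toNat) (fun k : ℕ => (k:ℤ)) ?_ ?_ ?_ ?_ ?_ <;>
    intro x hx <;> simp only [Finset.mem_Icc] at * <;>
    first
      | omega
      | (congr 1; omega)

/-- Eigenvectors/eigenvalues of the Reflective-BCs matrix
`W^R = T + H^R`: the DCT-III vectors `q_i` with entries `cos((i-1)(2j-1)π/(2n))`
are eigenvectors, with eigenvalues `λ_i^R = w_0 + 2 ∑_{j=1}^l w_j cos(j (i-1) π / n)`.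
(Indices are 0-based: `i.val` plays the role of `i - 1`, `j.val` of `j - 1`.) -/
theorem stmt_1 (n l : ℕ) (hn : 2 ≤ n) (w : ℕ → ℝ)
    (hl : 0 < l) (hln : l ≤ (n - 1) / 2)
    (hpos : ∀ j, j ≤ l → 0 < w j)
    (hzero : ∀ k, l < k → w k = 0)
    (hsum : w 0 + 2 * ∑ j ∈ Finset.Icc 1 l, w j = 1)
    (W : Matrix (Fin n) (Fin n) ℝ)
    (hW : ∀ i j : Fin n, W i j =
      w ((i.val : ℤ) - (j.val : ℤ)).natAbs
        + (w (i.val + j.val + 1) + w (2 * n - 1 - i.val - j.val)))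
    (i : Fin n) :
    W.mulVec
        (fun j : Fin n =>
          Real.cos ((i.val : ℝ) * (2 * (j.val : ℝ) + 1) * Real.pi / (2 * (n : ℝ))))
      = (w 0 + 2 * ∑ j ∈ Finset.Icc 1 l,
            w j * Real.cos ((j : ℝ) * (i.val : ℝ) * Real.pi / (n : ℝ))) •
        (fun j : Fin n =>
          Real.cos ((i.val : ℝ) * (2 * (j.val : ℝ) + 1) * Real.pi / (2 * (n : ℝ)))) := by
  have hn0 : (n:ℝ) ≠ 0 := by positivity
  have hlen : l ≤ n - 1 := le_trans hln (Nat.div_le_self _ _)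
  have hlnn : l < n := by omega
  set I : ℝ := (i.val : ℝ) with hI
  set F : ℤ → ℝ := fun m => Real.cos (I * (2 * (m:ℝ) + 1) * Real.pi / (2*(n:ℝ))) with hF
  -- reflection at the left boundary
  have hFrefl : ∀ m : ℤ, F (-1 - m) = F m := by
    intro m
    show Real.cos _ = Real.cos _
    rw [show I * (2 * ((-1 - m : ℤ):ℝ) + 1) * Real.pi / (2*(n:ℝ))
        = -(I * (2 * (m:ℝ) + 1) * Real.pi / (2*(n:ℝ))) by push_cast; ring, Real.cos_neg]
  -- reflection at the right boundary
  have hFper : ∀ m : ℤ, F (2*(n:ℤ) - 1 - m) = F m := by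
    intro m
    show Real.cos _ = Real.cos _
    rw [show I * (2 * ((2*(n:ℤ) - 1 - m : ℤ):ℝ) + 1) * Real.pi / (2*(n:ℝ))
        = ((i.val : ℤ) : ℝ) * (2 * Real.pi) - I * (2 * (m:ℝ) + 1) * Real.pi / (2*(n:ℝ)) by
      push_cast; field_simp; ring]
    exact Real.cos_int_mul_two_pi_sub _ _
  -- product-to-sum identity
  have hkey : ∀ (R k : ℤ), F (R - k) + F (R + k)
      = 2 * Real.cos ((k:ℝ) * I * Real.pi / (n:ℝ)) * F R := by
    intro R k
    show Real.cos _ + Real.cos _ = _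
    rw [show I * (2 * ((R - k : ℤ):ℝ) + 1) * Real.pi / (2*(n:ℝ))
        = I * (2 * (R:ℝ) + 1) * Real.pi / (2*(n:ℝ)) - (k:ℝ) * I * Real.pi / (n:ℝ) by
        push_cast; field_simp; ring,
      show I * (2 * ((R + k : ℤ):ℝ) + 1) * Real.pi / (2*(n:ℝ))
        = I * (2 * (R:ℝ) + 1) * Real.pi / (2*(n:ℝ)) + (k:ℝ) * I * Real.pi / (n:ℝ) by
        push_cast; field_simp; ring,
      Real.cos_sub, Real.cos_add]
    show _ = 2 * Real.cos ((k:ℝ) * I * Real.pi / (n:ℝ)) * Real.cos _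
    ring
  funext r
  set R : ℤ := (r.val : ℤ) with hR
  have hRb : 0 ≤ R ∧ R ≤ (n:ℤ) - 1 := ⟨Int.ofNat_nonneg _, by have := r.isLt; omega⟩
  set g : ℤ → ℝ := fun k => w k.natAbs * F (R - k) with hg
  -- the row sum
  have hmv : W.mulVec (fun j : Fin n => F (j.val : ℤ)) r
      = (∑ j : Fin n, w ((R - (j.val:ℤ)).natAbs) * F (j.val:ℤ))
        + ((∑ j : Fin n, w (r.val + j.val + 1) * F (j.val:ℤ))
          + ∑ j : Fin n, w (2 * n - 1 - r.val - j.val) * F (j.val:ℤ)) := by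
    simp only [Matrix.mulVec, dotProduct, hW, add_mul]
    rw [Finset.sum_add_distrib, Finset.sum_add_distrib]
  -- Toeplitz part
  have hT : (∑ j : Fin n, w ((R - (j.val:ℤ)).natAbs) * F (j.val:ℤ))
      = ∑ k ∈ Finset.Icc (R - n + 1) R, g k := by
    rw [← sum_shift_sub g n R, ← Fin.sum_univ_eq_sum_range (fun m => g (R - (m:ℤ)))]
    apply Finset.sum_congr rfl
    intro j _
    simp only [hg]
    rw [show R - (R - (j.val:ℤ)) = (j.val:ℤ) from by ring]
  -- Hankel part 1
  have hH1 : (∑ j : Fin n, w (r.val + j.val + 1) * F (j.val:ℤ))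
      = ∑ k ∈ Finset.Icc (R + 1) (R + n), g k := by
    have : ∑ k ∈ Finset.Icc (R+1) (R+1 + n - 1), g k = ∑ k ∈ Finset.Icc (R+1) (R+n), g k := by
      congr 1; ext x; simp only [Finset.mem_Icc]; omega
    rw [← this, ← sum_shift_add g n (R+1),
      ← Fin.sum_univ_eq_sum_range (fun m => g (R + 1 + (m:ℤ)))]
    apply Finset.sum_congr rfl
    intro j _
    simp only [hg]
    have h1 : (R + 1 + (j.val:ℤ)).natAbs = r.val + j.val + 1 := by omega
    have h2 : R - (R + 1 + (j.val:ℤ)) = -1 - (j.val:ℤ) := by ring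
    rw [h1, h2, hFrefl]
  -- Hankel part 2
  have hH2 : (∑ j : Fin n, w (2 * n - 1 - r.val - j.val) * F (j.val:ℤ))
      = ∑ k ∈ Finset.Icc (R + 1 - 2*n) (R - n), g k := by
    have : ∑ k ∈ Finset.Icc (R+1-2*n) (R+1-2*n + n - 1), g k
        = ∑ k ∈ Finset.Icc (R+1-2*n) (R-n), g k := by
      congr 1; ext x; simp only [Finset.mem_Icc]; omega
    rw [← this, ← sum_shift_add g n (R+1-2*n),
      ← Fin.sum_univ_eq_sum_range (fun m => g (R + 1 - 2*n + (m:ℤ)))]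
    apply Finset.sum_congr rfl
    intro j _
    simp only [hg]
    have hj := j.isLt
    have h1 : (R + 1 - 2*n + (j.val:ℤ)).natAbs = 2 * n - 1 - r.val - j.val := by omega
    have h2 : R - (R + 1 - 2*n + (j.val:ℤ)) = 2*(n:ℤ) - 1 - (j.val:ℤ) := by ring
    rw [h1, h2, hFper]
  -- combine the three intervals
  have hfull : W.mulVec (fun j : Fin n => F (j.val : ℤ)) r
      = ∑ k ∈ Finset.Icc (R + 1 - 2*n) (R + n), g k := by
    rw [hmv, hT, hH1, hH2]
    have m1 : (∑ k ∈ Finset.Icc (R+1-2*n) (R-n), g k) + ∑ k ∈ Finset.Icc (R-n+1) R, g k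
        = ∑ k ∈ Finset.Icc (R+1-2*n) R, g k := by
      have := sum_Icc_merge g (R+1-2*n) (R-n) R (by omega) (by omega)
      simpa [show R - n + 1 = R - n + 1 by ring] using this
    have m2 : (∑ k ∈ Finset.Icc (R+1-2*n) R, g k) + ∑ k ∈ Finset.Icc (R+1) (R+n), g k
        = ∑ k ∈ Finset.Icc (R+1-2*n) (R+n), g k := by
      exact sum_Icc_merge g (R+1-2*n) R (R+n) (by omega) (by omega)
    rw [← m2, ← m1]
    try ring
  -- shrink to Icc (-l) l
  have hshrink : ∑ k ∈ Finset.Icc (R + 1 - 2*n) (R + n), g k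
      = ∑ k ∈ Finset.Icc (-(l:ℤ)) (l:ℤ), g k := by
    symm
    apply Finset.sum_subset
    · intro x hx; simp only [Finset.mem_Icc] at *; omega
    · intro x hx hx'
      simp only [Finset.mem_Icc] at hx hx'
      have : l < x.natAbs := by omega
      simp only [hg, hzero _ this, zero_mul]
  -- split into 0, positive and negative parts
  have hsplit : ∑ k ∈ Finset.Icc (-(l:ℤ)) (l:ℤ), g k
      = w 0 * F R + ∑ k ∈ Finset.Icc (1:ℤ) (l:ℤ), (g k + g (-k)) := by
    have m1 : (∑ k ∈ Finset.Icc (-(l:ℤ)) (-1), g k) + ∑ k ∈ Finset.Icc (0:ℤ) (l:ℤ), g k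
        = ∑ k ∈ Finset.Icc (-(l:ℤ)) (l:ℤ), g k := by
      have := sum_Icc_merge g (-(l:ℤ)) (-1) (l:ℤ) (by omega) (by omega)
      simpa using this
    have m2 : (∑ k ∈ Finset.Icc (0:ℤ) (0:ℤ), g k) + ∑ k ∈ Finset.Icc (1:ℤ) (l:ℤ), g k
        = ∑ k ∈ Finset.Icc (0:ℤ) (l:ℤ), g k := by
      have := sum_Icc_merge g 0 0 (l:ℤ) (by omega) (by omega)
      simpa using this
    have hneg : ∑ k ∈ Finset.Icc (-(l:ℤ)) (-1), g k
        = ∑ k ∈ Finset.Icc (1:ℤ) (l:ℤ), g (-k) := by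
      rw [sum_Icc_neg g 1 (l:ℤ)]
    have h0 : ∑ k ∈ Finset.Icc (0:ℤ) (0:ℤ), g k = w 0 * F R := by
      simp [hg]
    rw [← m1, ← m2, hneg, h0, Finset.sum_add_distrib]
    ring
  -- evaluate the paired sum
  have hpair : ∑ k ∈ Finset.Icc (1:ℤ) (l:ℤ), (g k + g (-k))
      = ∑ k ∈ Finset.Icc 1 l, 2 * (w k * Real.cos ((k:ℝ) * I * Real.pi / (n:ℝ))) * F R := by
    have h1 : ∀ k ∈ Finset.Icc (1:ℤ) (l:ℤ), g k + g (-k)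
        = 2 * (w k.natAbs * Real.cos ((k:ℝ) * I * Real.pi / (n:ℝ))) * F R := by
      intro k hk
      simp only [Finset.mem_Icc] at hk
      simp only [hg, Int.natAbs_neg, sub_neg_eq_add]
      rw [← mul_add, hkey R k]
      ring
    rw [Finset.sum_congr rfl h1,
      sum_Icc_one_int_nat (fun k : ℤ => 2 * (w k.natAbs * Real.cos ((k:ℝ) * I * Real.pi / (n:ℝ))) * F R) l]
    apply Finset.sum_congr rfl
    intro k hk
    simp only [Int.natAbs_natCast, Int.cast_natCast]
  -- put everything together
  have hLHS : W.mulVec (fun j : Fin n => F (j.val : ℤ)) r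
      = (w 0 + 2 * ∑ j ∈ Finset.Icc 1 l,
            w j * Real.cos ((j : ℝ) * I * Real.pi / (n : ℝ))) * F R := by
    rw [hfull, hshrink, hsplit, hpair]
    have heq : ∑ k ∈ Finset.Icc 1 l, 2 * (w k * Real.cos ((k:ℝ) * I * Real.pi / (n:ℝ))) * F R
        = (2 * ∑ j ∈ Finset.Icc 1 l, w j * Real.cos ((j:ℝ) * I * Real.pi / (n:ℝ))) * F R := by
      rw [Finset.mul_sum, Finset.sum_mul]
    rw [heq]
    ring
  have hvec : (fun j : Fin n =>
      Real.cos (I * (2 * (j.val : ℝ) + 1) * Real.pi / (2 * (n : ℝ))))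
      = fun j : Fin n => F (j.val : ℤ) := by
    funext j
    simp only [hF, Int.cast_natCast]
  rw [hvec, hLHS]
  simp only [Pi.smul_apply, smul_eq_mul, hR]
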